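/- Assume M > (2/(3√3))√(α³/β) and let (x_l, v_l) be a solution of the controlled discrete Klein–Gordon system on [0,∞) with the feedback control u_l(t) = u(v_l(t)). Then for every l ∈ Λ̄ the discrete Laplacian of the positions converges to zero: lim_{t→∞} Σ_{l'∼l} (x_{l'}(t) − x_l(t))/h² = 0. -/

import Mathlib

open Finset Filter

/-- The discrete torus `(ℤ/Dℤ)^n`. -/
abbrev Site (D n : ℕ) : Type := Fin n → ZMod D

/-- Sum over the `2n` neighbors `l ± e_k` of a site `l`. -/
noncomputable def nbrSum {D n : ℕ} (g : Site D n → ℝ) (l : Site D n) : ℝ :=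
  ∑ k : Fin n, (g (Function.update l k (l k + 1)) + g (Function.update l k (l k - 1)))

/-- The discrete Laplacian `Δ_D f(l) = Σ_{l'∼l} (f(l') − f(l))/h²` with `h = 1/D`. -/
noncomputable def lap {D n : ℕ} (f : Site D n → ℝ) (l : Site D n) : ℝ :=
  nbrSum (fun l' => (f l' - f l) / ((1 : ℝ) / (D : ℝ)) ^ 2) l


/-- The feedback control of the paper (equation (2.3)). -/
noncomputable def fb (M a₁ a₂ : ℝ) (v : ℝ) : ℝ :=
  if 2 * a₂ ≤ |v| then 0
  else if a₂ < |v| then -M * (v / |v|) * (2 - |v| / a₂)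
  else if a₁ ≤ |v| then -M * (v / |v|)
  else -M * (v / a₁)


lemma decay_le (f f' : ℝ → ℝ) (t δ m : ℝ) (hδ : 0 ≤ δ)
    (hf : ∀ s ∈ Set.Icc t (t+δ), HasDerivAt f (f' s) s)
    (hm : ∀ s ∈ Set.Icc t (t+δ), f' s ≤ -m) :
    f (t+δ) ≤ f t - m*δ := by
  have key : AntitoneOn (fun s => f s + m*s) (Set.Icc t (t+δ)) := by
    apply antitoneOn_of_deriv_nonpos (convex_Icc _ _)
    · intro s hs
      exact ((hf s hs).add ((hasDerivAt_id s).const_mul m)).continuousAt.continuousWithinAt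
    · intro s hs
      have hs' := interior_subset hs
      exact ((hf s hs').add ((hasDerivAt_id s).const_mul m)).differentiableAt.differentiableWithinAt
    · intro s hs
      have hs' := interior_subset hs
      have hd : HasDerivAt (fun s => f s + m*s) (f' s + m) s := by
        have := (hf s hs').fun_add ((hasDerivAt_id s).const_mul m)
        simp only [id, mul_one] at this; exact this
      rw [hd.deriv]
      have := hm s hs'
      linarith
  have h1 : t ∈ Set.Icc t (t+δ) := by constructor <;> linarith
  have h2 : t + δ ∈ Set.Icc t (t+δ) := by constructor <;> linarith
  have := key h1 h2 (by linarith)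
  simp only at this
  linarith

lemma tendsto_deriv_zero (f g : ℝ → ℝ) (T B : ℝ) (hB : 0 < B)
    (hf : ∀ t, T ≤ t → HasDerivAt f (g t) t)
    (hLip : ∀ s t, T ≤ s → T ≤ t → |g s - g t| ≤ B * |s - t|)
    (h0 : Tendsto f atTop (nhds 0)) : Tendsto g atTop (nhds 0) := by
  rw [Metric.tendsto_atTop] at h0 ⊢
  intro ε hε
  set δ := ε/(2*B) with hδdef
  have hδ : 0 < δ := by positivity
  obtain ⟨N, hN⟩ := h0 (ε*δ/8) (by positivity)
  refine ⟨max T N, fun t ht => ?_⟩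
  have hT : T ≤ t := le_trans (le_max_left _ _) ht
  have hNt : N ≤ t := le_trans (le_max_right _ _) ht
  rw [Real.dist_eq, sub_zero]
  by_contra hcon
  push_neg at hcon
  have hhalf : ∀ s ∈ Set.Icc t (t+δ), |g s - g t| ≤ ε/2 := by
    intro s hs
    have h1 := hLip s t (le_trans hT hs.1) hT
    have h2 : |s - t| ≤ δ := by
      rw [abs_of_nonneg (by linarith [hs.1])]
      linarith [hs.2]
    calc |g s - g t| ≤ B * |s - t| := h1
      _ ≤ B * δ := by nlinarith
      _ = ε/2 := by rw [hδdef]; field_simp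
  have hft := hN t hNt
  have hftδ := hN (t+δ) (by linarith)
  rw [Real.dist_eq, sub_zero] at hft hftδ
  rw [abs_lt] at hft hftδ
  rcases le_or_gt ε (g t) with hpos | hneg
  · have hge : f (t+δ) ≥ f t + (ε/2)*δ := by
      have hd := decay_le (fun s => -f s) (fun s => -g s) t δ (ε/2) hδ.le
        (fun s hs => (hf s (le_trans hT hs.1)).neg)
        (fun s hs => by
          have h2 := hhalf s hs
          rw [abs_le] at h2
          simp only [neg_le_neg_iff]
          linarith [h2.1])
      
      linarith
    nlinarith [hft.1, hft.2, hftδ.1, hftδ.2]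
  · have hneg' : g t ≤ -ε := by
      rcases abs_cases (g t) with ⟨h, _⟩ | ⟨h, _⟩
      · linarith [hcon]
      · linarith [hcon]
    have hle : f (t+δ) ≤ f t - (ε/2)*δ := by
      apply decay_le f g t δ (ε/2) hδ.le (fun s hs => hf s (le_trans hT hs.1))
      intro s hs
      have h2 := hhalf s hs
      rw [abs_le] at h2
      linarith [h2.2]
    nlinarith [hft.1, hft.2, hftδ.1, hftδ.2]

def shiftE {D n : ℕ} [NeZero D] (k : Fin n) : Site D n ≃ Site D n where
  toFun l := Function.update l k (l k + 1)
  invFun l := Function.update l k (l k - 1)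
  left_inv l := by simp [Function.update_idem]
  right_inv l := by simp [Function.update_idem]


lemma sum_nbrSum_symm {D n : ℕ} [NeZero D] (F : Site D n → Site D n → ℝ) :
    ∑ l : Site D n, nbrSum (fun l' => F l l') l = ∑ l : Site D n, nbrSum (fun l' => F l' l) l := by
  simp only [nbrSum]
  rw [Finset.sum_comm]
  nth_rewrite 2 [Finset.sum_comm]
  apply Finset.sum_congr rfl
  intro k _
  have h1 : ∑ l : Site D n, F l (Function.update l k (l k + 1))
      = ∑ l : Site D n, F (Function.update l k (l k - 1)) l := by
    apply Fintype.sum_equiv (shiftE k)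
    intro l
    have : Function.update ((shiftE k) l) k ((shiftE k) l k - 1) = l := (shiftE k).left_inv l
    rw [show (shiftE (D := D) k) l = Function.update l k (l k + 1) from rfl] at this ⊢
    rw [this]
  have h2 : ∑ l : Site D n, F l (Function.update l k (l k - 1))
      = ∑ l : Site D n, F (Function.update l k (l k + 1)) l := by
    apply Fintype.sum_equiv (shiftE k).symm
    intro l
    have : Function.update ((shiftE k).symm l) k ((shiftE k).symm l k + 1) = l := (shiftE k).right_inv l
    rw [show (shiftE (D := D) k).symm l = Function.update l k (l k - 1) from rfl] at this ⊢
    rw [this]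
  rw [Finset.sum_add_distrib, Finset.sum_add_distrib, h1, h2, add_comm]


lemma sum_identity {D n : ℕ} [NeZero D] (Ksq : ℝ) (hKsq : Ksq ≠ 0) (X V : Site D n → ℝ) :
    ∑ l : Site D n, nbrSum (fun l' => 2*(X l' - X l)*(V l' - V l)) l
      = -(4*Ksq) * ∑ l : Site D n, V l * nbrSum (fun l' => (X l' - X l)/Ksq) l := by
  have expand : ∀ l : Site D n, nbrSum (fun l' => 2*(X l' - X l)*(V l' - V l)) l
      = nbrSum (fun l' => 2*(X l' - X l)*V l') l - nbrSum (fun l' => 2*(X l' - X l)*V l) l := by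
    intro l
    simp only [nbrSum, ← Finset.sum_sub_distrib]
    exact Finset.sum_congr rfl (fun k _ => by ring)
  have hsym := sum_nbrSum_symm (fun a b => 2*(X b - X a) * V b)
  have hneg : ∀ l : Site D n, nbrSum (fun l' => 2*(X l - X l')*V l) l
      = -nbrSum (fun l' => 2*(X l' - X l)*V l) l := by
    intro l
    simp only [nbrSum, ← Finset.sum_neg_distrib]
    exact Finset.sum_congr rfl (fun k _ => by ring)
  have hB : ∀ l : Site D n, nbrSum (fun l' => 2*(X l' - X l)*V l) l
      = 2*Ksq*(V l * nbrSum (fun l' => (X l' - X l)/Ksq) l) := by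
    intro l
    simp only [nbrSum, Finset.mul_sum]
    apply Finset.sum_congr rfl
    intro k _
    field_simp
    
  calc ∑ l : Site D n, nbrSum (fun l' => 2*(X l' - X l)*(V l' - V l)) l
      = ∑ l : Site D n, (nbrSum (fun l' => 2*(X l' - X l)*V l') l
          - nbrSum (fun l' => 2*(X l' - X l)*V l) l) := Finset.sum_congr rfl (fun l _ => expand l)
    _ = ∑ l : Site D n, nbrSum (fun l' => 2*(X l' - X l)*V l') l
          - ∑ l : Site D n, nbrSum (fun l' => 2*(X l' - X l)*V l) l := Finset.sum_sub_distrib _ _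
    _ = -2 * ∑ l : Site D n, nbrSum (fun l' => 2*(X l' - X l)*V l) l := by
        rw [hsym]
        rw [Finset.sum_congr rfl (fun l _ => hneg l)]
        rw [Finset.sum_neg_distrib]
        ring
    _ = -2 * ∑ l : Site D n, 2*Ksq*(V l * nbrSum (fun l' => (X l' - X l)/Ksq) l) := by
        rw [Finset.sum_congr rfl (fun l _ => hB l)]
    _ = -(4*Ksq) * ∑ l : Site D n, V l * nbrSum (fun l' => (X l' - X l)/Ksq) l := by
        rw [← Finset.mul_sum]
        ring

lemma cubic_bound (α β s : ℝ) (hα : 0 < α) (hβ : 0 < β) (hs : 0 ≤ s) :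
    α*s - β*s^3 ≤ 2/(3*Real.sqrt 3)*Real.sqrt (α^3/β) := by
  set s₀ := Real.sqrt (α/(3*β)) with hs₀def
  have hs₀0 : 0 ≤ s₀ := Real.sqrt_nonneg _
  have hs₀ : s₀^2 = α/(3*β) := Real.sq_sqrt (by positivity)
  have h3 : 3*β*s₀^2 = α := by rw [hs₀]; field_simp
  have key : 0 ≤ β*(s-s₀)^2*(s+2*s₀) := by positivity
  have hsq3 : (Real.sqrt 3)^2 = 3 := Real.sq_sqrt (by norm_num)
  have hsq3pos : 0 < Real.sqrt 3 := by positivity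
  have hrhs : Real.sqrt (α^3/β) = Real.sqrt 3 * α * s₀ := by
    rw [show α^3/β = (Real.sqrt 3*α*s₀)^2 by
      rw [mul_pow, mul_pow, hsq3, hs₀]; field_simp]
    exact Real.sqrt_sq (by positivity)
  rw [hrhs]
  have heq : 2/(3*Real.sqrt 3)*(Real.sqrt 3*α*s₀) = 2*α*s₀/3 := by
    field_simp
    
  rw [heq]
  nlinarith [key, h3]


lemma fb_abs_le (M a₁ a₂ : ℝ) (hM : 0 < M) (ha₁ : 0 < a₁) (ha₁₂ : a₁ ≤ a₂) (y : ℝ) :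
    |fb M a₁ a₂ y| ≤ M := by
  have ha₂ : 0 < a₂ := lt_of_lt_of_le ha₁ ha₁₂
  unfold fb
  split_ifs with h1 h2 h3
  · simpa using hM.le
  · push_neg at h1
    have hy : 0 < |y| := lt_trans ha₂ h2
    have hdiv : abs (y / |y|) = 1 := by
      rw [abs_div, abs_abs, div_self hy.ne']
    rw [abs_mul, abs_mul, hdiv, abs_neg, abs_of_pos hM, mul_one]
    have h4 : abs (2 - |y| / a₂) = 2 - |y|/a₂ := by
      rw [abs_of_nonneg]
      rw [sub_nonneg, div_le_iff₀ ha₂]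
      linarith
    rw [h4]
    have : 1 ≤ |y|/a₂ := (le_div_iff₀ ha₂).2 (by linarith)
    nlinarith
  · have hy : 0 < |y| := lt_of_lt_of_le ha₁ h3
    have hdiv : abs (y / |y|) = 1 := by
      rw [abs_div, abs_abs, div_self hy.ne']
    rw [abs_mul, hdiv, abs_neg, abs_of_pos hM, mul_one]
  · push_neg at h3
    rw [abs_mul, abs_neg, abs_of_pos hM, abs_div, abs_of_pos ha₁]
    have : |y|/a₁ ≤ 1 := by
      rw [div_le_one ha₁]; linarith
    nlinarith


lemma fb_small (M a₁ a₂ : ℝ) (ha₁ : 0 < a₁) (ha₁₂ : a₁ ≤ a₂) (y : ℝ) (hy : |y| < a₁) :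
    fb M a₁ a₂ y = -M * (y / a₁) := by
  have ha₂ : 0 < a₂ := lt_of_lt_of_le ha₁ ha₁₂
  unfold fb
  rw [if_neg (by push_neg; linarith), if_neg (by push_neg; linarith), if_neg (by push_neg; linarith)]


set_option maxHeartbeats 1000000 in
lemma gfun_bound (α β M γ a₁ a₂ : ℝ) (hα : 0 < α) (hβ : 0 < β)
    (hM : 2/(3*Real.sqrt 3)*Real.sqrt (α^3/β) < M)
    (hγ1 : 1 < γ) (hMγ : Real.sqrt (α^3/β) < M*γ)
    (ha₁ : a₁ = γ⁻¹ * Real.sqrt (α/β)) (ha₂ : a₂ = γ * Real.sqrt (α/β)) :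
    ∃ c, 0 < c ∧ ∀ y : ℝ, y * ((α - β*y^2)*y + fb M a₁ a₂ y) ≤ -c*y^2 := by
  set sab := Real.sqrt (α/β) with hsabdef
  have hsab2 : sab^2 = α/β := Real.sq_sqrt (by positivity)
  have hsab0 : 0 < sab := Real.sqrt_pos.2 (by positivity)
  have hγ0 : 0 < γ := lt_trans one_pos hγ1
  have ha₁0 : 0 < a₁ := by rw [ha₁]; positivity
  have ha₂0 : 0 < a₂ := by rw [ha₂]; positivity
  have ha₁₂ : a₁ ≤ a₂ := by
    rw [ha₁, ha₂]
    have hinv : γ⁻¹ ≤ γ := by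
      rw [inv_eq_one_div, div_le_iff₀ hγ0]; nlinarith
    nlinarith
  set P := 2/(3*Real.sqrt 3)*Real.sqrt (α^3/β) with hPdef
  have hP0 : 0 < P := by
    have h1 : 0 < Real.sqrt (α^3/β) := Real.sqrt_pos.2 (by positivity)
    have h3 : 0 < Real.sqrt 3 := Real.sqrt_pos.2 (by norm_num)
    positivity
  have hM0 : 0 < M := lt_trans hP0 hM
  have hαsab : α * sab = Real.sqrt (α^3/β) := by
    rw [show α^3/β = (α*sab)^2 by rw [mul_pow, hsab2]; field_simp]
    exact (Real.sqrt_sq (by positivity)).symm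
  have hc₁ : α < M/a₁ := by
    rw [lt_div_iff₀ ha₁0, ha₁]
    calc α * (γ⁻¹ * sab) = (α*sab)*γ⁻¹ := by ring
    _ < (M*γ)*γ⁻¹ := by
        apply mul_lt_mul_of_pos_right _ (by positivity)
        rw [hαsab]; exact hMγ
    _ = M := by field_simp
  clear_value sab P
  set c₁ := M/a₁ - α with hc₁def
  set c₂ := (M-P)/a₂ with hc₂def
  set c₃ := α*(γ^2-1) with hc₃def
  clear_value c₁ c₂ c₃
  have hc₁0 : 0 < c₁ := by rw [hc₁def]; linarith
  have hc₂0 : 0 < c₂ := by rw [hc₂def]; apply div_pos; linarith; exact ha₂0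
  have hc₃0 : 0 < c₃ := by
    rw [hc₃def]
    exact mul_pos hα (by nlinarith)
  refine ⟨min c₁ (min c₂ c₃), lt_min hc₁0 (lt_min hc₂0 hc₃0), fun y => ?_⟩
  set c := min c₁ (min c₂ c₃) with hcdef
  clear_value c
  have hcc₁ : c ≤ c₁ := by rw [hcdef]; exact min_le_left _ _
  have hcc₂ : c ≤ c₂ := by rw [hcdef]; exact le_trans (min_le_right _ _) (min_le_left _ _)
  have hcc₃ : c ≤ c₃ := by rw [hcdef]; exact le_trans (min_le_right _ _) (min_le_right _ _)
  have ha₂sq : a₂^2 = γ^2*(α/β) := by rw [ha₂, mul_pow, hsab2]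
  have hβαβ : β*(α/β) = α := by field_simp
  unfold fb
  split_ifs with h1 h2 h3
  · -- |y| ≥ 2a₂
    have hy2 : a₂^2 ≤ y^2 := by
      rw [← sq_abs y]
      nlinarith [abs_nonneg y]
    have hb : γ^2*α ≤ β*y^2 := by nlinarith
    nlinarith [mul_nonneg (sub_nonneg.2 hb) (sq_nonneg y),
      mul_nonneg (sub_nonneg.2 hcc₃) (sq_nonneg y)]
  · -- a₂ < |y| < 2a₂
    push_neg at h1
    have hy0 : 0 < |y| := lt_trans ha₂0 h2
    have hq : y * (y / |y|) = |y| := by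
      rw [mul_div_assoc', ← abs_mul_abs_self y, mul_div_assoc, div_self hy0.ne', mul_one]
    have hrw : y * (-M * (y / |y|) * (2 - |y| / a₂)) = -(M*(y*(y/|y|))*(2-|y|/a₂)) := by ring
    rw [mul_add, hrw, hq]
    have hy2 : a₂^2 ≤ y^2 := by
      rw [← sq_abs y]; nlinarith
    have hb : γ^2*α ≤ β*y^2 := by nlinarith
    have hnn : 0 ≤ M * |y| * (2 - |y| / a₂) := by
      apply mul_nonneg (mul_nonneg hM0.le (abs_nonneg y))
      rw [sub_nonneg, div_le_iff₀ ha₂0]; linarith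
    nlinarith [mul_nonneg (sub_nonneg.2 hb) (sq_nonneg y),
      mul_nonneg (sub_nonneg.2 hcc₃) (sq_nonneg y)]
  · -- a₁ ≤ |y| ≤ a₂
    push_neg at h1 h2
    have hy0 : 0 < |y| := lt_of_lt_of_le ha₁0 h3
    have hq : y * (y / |y|) = |y| := by
      rw [mul_div_assoc', ← abs_mul_abs_self y, mul_div_assoc, div_self hy0.ne', mul_one]
    have hrw : y * (-M * (y / |y|)) = -(M*(y*(y/|y|))) := by ring
    rw [mul_add, hrw, hq]
    have hcub := cubic_bound α β (|y|) hα hβ (abs_nonneg y)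
    rw [← hPdef] at hcub
    have hCa : c*a₂ ≤ M - P := by
      rw [hc₂def] at hcc₂
      rw [← le_div_iff₀ ha₂0]
      exact hcc₂
    have h4 : y^4 = |y|^4 := by
      rw [← abs_pow]
      exact (abs_of_nonneg (by positivity)).symm
    ring_nf
    rw [← sq_abs y, h4]
    nlinarith [mul_nonneg (mul_nonneg ha₂0.le (abs_nonneg y)) (sub_nonneg.2 hcub),
      mul_nonneg (sub_nonneg.2 hM.le) (mul_nonneg (abs_nonneg y) (sub_nonneg.2 h2)),
      mul_nonneg (pow_nonneg (abs_nonneg y) 2) (sub_nonneg.2 hCa), ha₂0]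
  · -- |y| < a₁
    push_neg at h1 h2 h3
    have hrw : y * (-M * (y / a₁)) = -(M/a₁*y^2) := by
      field_simp
      
    have hCa : c*a₁ ≤ M - α*a₁ := by
      rw [le_sub_iff_add_le]
      calc c*a₁ + α*a₁ = (c+α)*a₁ := by ring
      _ ≤ (M/a₁)*a₁ := mul_le_mul_of_nonneg_right (by linarith [hcc₁]) ha₁0.le
      _ = M := by field_simp
    rw [mul_add, hrw]
    have hdivrel : (M/a₁)*a₁ = M := by field_simp
    nlinarith [mul_nonneg (sq_nonneg y) (sub_nonneg.2 hCa),
      mul_nonneg (mul_nonneg ha₁0.le hβ.le) (sq_nonneg (y^2)), ha₁0,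
      mul_nonneg (sq_nonneg y) hβ.le]

set_option maxHeartbeats 2000000 in
/-- Lemma 2.2: under the feedback control, the discrete Laplacian of the
positions converges to zero at every site. -/
theorem laplacian_tends_to_zero (D n : ℕ) [NeZero D] (hn : 1 ≤ n)
    (α β M γ : ℝ) (hα : 0 < α) (hβ : 0 < β)
    (hM : 2 / (3 * Real.sqrt 3) * Real.sqrt (α ^ 3 / β) < M)
    (hγ : max 1 (1 / M * Real.sqrt (α ^ 3 / β)) < γ)
    (a₁ a₂ : ℝ)
    (ha₁ : a₁ = γ⁻¹ * Real.sqrt (α / β)) (ha₂ : a₂ = γ * Real.sqrt (α / β))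
    (x v : Site D n → ℝ → ℝ)
    (hx : ∀ l t, 0 ≤ t → HasDerivAt (x l) (v l t) t)
    (hv : ∀ l t, 0 ≤ t → HasDerivAt (v l)
      (lap (fun l' => x l' t) l + (α - β * (v l t) ^ 2) * v l t + fb M a₁ a₂ (v l t)) t) :
    ∀ l : Site D n,
      Filter.Tendsto (fun t => lap (fun l' => x l' t) l) Filter.atTop (nhds 0) := by
  intro l₀
  -- basic scalar facts
  have hD0 : (0:ℝ) < (D:ℝ) := by
    have := Nat.pos_of_ne_zero (NeZero.ne D)
    exact_mod_cast this
  obtain ⟨Ksq, hKsqdef⟩ : ∃ K : ℝ, ((1:ℝ)/(D:ℝ))^2 = K := ⟨_, rfl⟩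
  have hKsq : 0 < Ksq := by rw [← hKsqdef]; positivity
  have hLap : ∀ (f : Site D n → ℝ) (l : Site D n),
      lap f l = nbrSum (fun l' => (f l' - f l)/Ksq) l := by
    intro f l; simp only [lap, hKsqdef]
  have hγ1 : 1 < γ := lt_of_le_of_lt (le_max_left _ _) hγ
  have hγ0 : 0 < γ := lt_trans one_pos hγ1
  have hP0 : 0 < 2/(3*Real.sqrt 3)*Real.sqrt (α^3/β) := by
    have h1 : 0 < Real.sqrt (α^3/β) := Real.sqrt_pos.2 (by positivity)
    have h3 : 0 < Real.sqrt 3 := Real.sqrt_pos.2 (by norm_num)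
    positivity
  have hM0 : 0 < M := lt_trans hP0 hM
  have hMγ : Real.sqrt (α^3/β) < M*γ := by
    have h1 : (1/M) * Real.sqrt (α^3/β) < γ := lt_of_le_of_lt (le_max_right _ _) hγ
    calc Real.sqrt (α^3/β) = M*((1/M)*Real.sqrt (α^3/β)) := by field_simp
    _ < M*γ := by exact mul_lt_mul_of_pos_left h1 hM0
  have hsab0 : 0 < Real.sqrt (α/β) := Real.sqrt_pos.2 (by positivity)
  have ha₁0 : 0 < a₁ := by rw [ha₁]; exact mul_pos (inv_pos.2 hγ0) hsab0
  have ha₂0 : 0 < a₂ := by rw [ha₂]; exact mul_pos hγ0 hsab0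
  have ha₁₂ : a₁ ≤ a₂ := by
    rw [ha₁, ha₂]
    have hinv : γ⁻¹ ≤ γ := by
      rw [inv_eq_one_div, div_le_iff₀ hγ0]; nlinarith
    nlinarith
  obtain ⟨c, hc0, hgf⟩ := gfun_bound α β M γ a₁ a₂ hα hβ hM hγ1 hMγ ha₁ ha₂
  -- the right-hand side of the velocity equation
  set w : Site D n → ℝ → ℝ := fun l t =>
    lap (fun l' => x l' t) l + (α - β * (v l t) ^ 2) * v l t + fb M a₁ a₂ (v l t) with hwdef
  clear_value w
  have hv' : ∀ l t, 0 ≤ t → HasDerivAt (v l) (w l t) t := by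
    intro l t ht
    simp only [hwdef]
    exact hv l t ht
  -- the energy
  set EE : ℝ → ℝ := fun t => (∑ l : Site D n, (v l t)^2/2)
      + (1/(4*Ksq)) * ∑ l : Site D n, nbrSum (fun l' => (x l' t - x l t)^2) l with hEEdef
  -- derivative of the potential part
  have hU' : ∀ t, 0 ≤ t → HasDerivAt
      (fun s => (1/(4*Ksq)) * ∑ l : Site D n, nbrSum (fun l' => (x l' s - x l s)^2) l)
      (-∑ l : Site D n, v l t * lap (fun l' => x l' t) l) t := by
    intro t ht
    have h1 : HasDerivAt (fun s => ∑ l : Site D n, nbrSum (fun l' => (x l' s - x l s)^2) l)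
        (∑ l : Site D n, nbrSum (fun l' => 2*(x l' t - x l t)*(v l' t - v l t)) l) t := by
      simp only [nbrSum]
      apply HasDerivAt.fun_sum
      intro l _
      apply HasDerivAt.fun_sum
      intro k _
      have hp : ∀ l' : Site D n, HasDerivAt (fun s => (x l' s - x l s)^2)
          (2*(x l' t - x l t)*(v l' t - v l t)) t := by
        intro l'
        have h := ((hx l' t ht).fun_sub (hx l t ht)).fun_pow 2
        refine h.congr_deriv ?_
        ring
      exact (hp _).fun_add (hp _)
    have h2 := h1.const_mul (1/(4*Ksq))
    have hval : (1/(4*Ksq)) * ∑ l : Site D n, nbrSum (fun l' => 2*(x l' t - x l t)*(v l' t - v l t)) l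
        = -∑ l : Site D n, v l t * lap (fun l' => x l' t) l := by
      rw [sum_identity Ksq hKsq.ne' (fun l => x l t) (fun l => v l t)]
      rw [show (∑ l : Site D n, v l t * nbrSum (fun l' => (x l' t - x l t)/Ksq) l)
          = ∑ l : Site D n, v l t * lap (fun l' => x l' t) l from
        Finset.sum_congr rfl (fun l _ => by rw [hLap (fun l' => x l' t) l])]
      field_simp
      
    exact hval ▸ h2
  -- derivative of the energy
  have hE' : ∀ t, 0 ≤ t → HasDerivAt EE
      (∑ l : Site D n, v l t * ((α - β * (v l t) ^ 2) * v l t + fb M a₁ a₂ (v l t))) t := by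
    intro t ht
    rw [hEEdef]
    have hkin : HasDerivAt (fun s => ∑ l : Site D n, (v l s)^2/2)
        (∑ l : Site D n, v l t * w l t) t := by
      apply HasDerivAt.fun_sum
      intro l _
      have h := ((hv' l t ht).fun_pow 2).div_const 2
      refine h.congr_deriv ?_
      ring
    have h := hkin.add (hU' t ht)
    have hval : (∑ l : Site D n, v l t * w l t) + (-∑ l : Site D n, v l t * lap (fun l' => x l' t) l)
        = ∑ l : Site D n, v l t * ((α - β * (v l t) ^ 2) * v l t + fb M a₁ a₂ (v l t)) := by
      simp only [hwdef]
      rw [← Finset.sum_neg_distrib, ← Finset.sum_add_distrib]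
      exact Finset.sum_congr rfl (fun l _ => by ring)
    exact hval ▸ h
  clear_value EE
  -- energy is nonincreasing on [0, ∞)
  have hgf0 : ∀ y : ℝ, y * ((α - β * y ^ 2) * y + fb M a₁ a₂ y) ≤ 0 := by
    intro y
    have h := hgf y
    nlinarith [sq_nonneg y]
  have hEanti : AntitoneOn EE (Set.Ici (0:ℝ)) := by
    apply antitoneOn_of_deriv_nonpos (convex_Ici 0)
    · intro t ht
      exact (hE' t ht).continuousAt.continuousWithinAt
    · intro t ht
      rw [interior_Ici] at ht
      exact (hE' t ht.le).differentiableAt.differentiableWithinAt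
    · intro t ht
      rw [interior_Ici] at ht
      rw [(hE' t ht.le).deriv]
      exact Finset.sum_nonpos (fun l _ => hgf0 (v l t))
  -- energy is nonnegative
  have hUnn : ∀ t : ℝ, 0 ≤ (1/(4*Ksq)) * ∑ l : Site D n, nbrSum (fun l' => (x l' t - x l t)^2) l := by
    intro t
    apply mul_nonneg (by positivity)
    apply Finset.sum_nonneg
    intro l _
    simp only [nbrSum]
    exact Finset.sum_nonneg (fun k _ => add_nonneg (sq_nonneg _) (sq_nonneg _))
  have hEnn : ∀ t : ℝ, 0 ≤ EE t := by
    intro t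
    rw [hEEdef]
    exact add_nonneg (Finset.sum_nonneg (fun l _ => by positivity)) (hUnn t)
  -- energy has a limit at infinity
  have hmaxanti : Antitone (fun t => EE (max t 0)) := by
    intro s t hst
    exact hEanti (Set.mem_Ici.2 (le_max_right s 0)) (Set.mem_Ici.2 (le_max_right t 0)) (max_le_max hst le_rfl)
  have hbdd : BddBelow (Set.range fun t => EE (max t 0)) := by
    refine ⟨0, ?_⟩
    rintro y ⟨t, rfl⟩
    exact hEnn _
  have hElim : Tendsto EE atTop (nhds (⨅ t : ℝ, EE (max t 0))) := by
    have h1 := tendsto_atTop_ciInf hmaxanti hbdd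
    apply h1.congr'
    filter_upwards [eventually_ge_atTop (0:ℝ)] with t ht
    rw [max_eq_left ht]
  set L := ⨅ t : ℝ, EE (max t 0) with hLdef
  clear_value L
  -- bounds from the energy
  have hE0 : ∀ t, 0 ≤ t → EE t ≤ EE 0 := fun t ht => hEanti Set.self_mem_Ici ht ht
  have hv2 : ∀ (l : Site D n) (t : ℝ), 0 ≤ t → (v l t)^2 ≤ 2*EE 0 := by
    intro l t ht
    have h1 : (v l t)^2/2 ≤ ∑ l' : Site D n, (v l' t)^2/2 :=
      Finset.single_le_sum (f := fun l' : Site D n => (v l' t)^2/2)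
        (fun i _ => by positivity) (Finset.mem_univ l)
    have hket : (v l t)^2/2 ≤ EE t := by
      simp only [hEEdef]
      have h3 := hUnn t
      linarith
    have h2 : EE t ≤ EE 0 := hE0 t ht
    linarith
  set Bv := Real.sqrt (2*EE 0) with hBvdef
  clear_value Bv
  have hvb : ∀ (l : Site D n) (t : ℝ), 0 ≤ t → |v l t| ≤ Bv := by
    intro l t ht
    rw [hBvdef, ← Real.sqrt_sq_eq_abs]
    exact Real.sqrt_le_sqrt (hv2 l t ht)
  -- bound on position differences
  have hterm : ∀ (t : ℝ), 0 ≤ t → ∀ (l : Site D n) (k : Fin n),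
      (x (Function.update l k (l k + 1)) t - x l t)^2
        + (x (Function.update l k (l k - 1)) t - x l t)^2 ≤ 4*Ksq*EE 0 := by
    intro t ht l k
    have h1 : (x (Function.update l k (l k + 1)) t - x l t)^2
        + (x (Function.update l k (l k - 1)) t - x l t)^2
        ≤ nbrSum (fun l' => (x l' t - x l t)^2) l := by
      simp only [nbrSum]
      exact Finset.single_le_sum (f := fun k : Fin n =>
          (x (Function.update l k (l k + 1)) t - x l t)^2
            + (x (Function.update l k (l k - 1)) t - x l t)^2)
        (fun i _ => add_nonneg (sq_nonneg _) (sq_nonneg _)) (Finset.mem_univ k)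
    have h2 : nbrSum (fun l' => (x l' t - x l t)^2) l
        ≤ ∑ l' : Site D n, nbrSum (fun l'' => (x l'' t - x l' t)^2) l' := by
      apply Finset.single_le_sum (f := fun l' => nbrSum (fun l'' => (x l'' t - x l' t)^2) l')
        (fun i _ => ?_) (Finset.mem_univ l)
      simp only [nbrSum]
      exact Finset.sum_nonneg (fun k _ => add_nonneg (sq_nonneg _) (sq_nonneg _))
    have h3 : (1/(4*Ksq)) * ∑ l' : Site D n, nbrSum (fun l'' => (x l'' t - x l' t)^2) l' ≤ EE 0 := by
      have h4 : EE t ≤ EE 0 := hE0 t ht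
      have h5 : 0 ≤ ∑ l' : Site D n, (v l' t)^2/2 :=
        Finset.sum_nonneg (fun l' _ => by positivity)
      have h6 : (1/(4*Ksq)) * ∑ l' : Site D n, nbrSum (fun l'' => (x l'' t - x l' t)^2) l' ≤ EE t := by
        simp only [hEEdef]
        linarith
      linarith
    have h6 : ∑ l' : Site D n, nbrSum (fun l'' => (x l'' t - x l' t)^2) l' ≤ 4*Ksq*EE 0 := by
      have h7 : (1/(4*Ksq))*(4*Ksq) = 1 := by field_simp
      nlinarith [h3, hKsq]
    linarith
  set Q := Real.sqrt (4*Ksq*EE 0) with hQdef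
  clear_value Q
  have hQp : ∀ (t : ℝ), 0 ≤ t → ∀ (l : Site D n) (k : Fin n),
      |x (Function.update l k (l k + 1)) t - x l t| ≤ Q := by
    intro t ht l k
    rw [hQdef, ← Real.sqrt_sq_eq_abs]
    apply Real.sqrt_le_sqrt
    nlinarith [hterm t ht l k, sq_nonneg (x (Function.update l k (l k - 1)) t - x l t)]
  have hQm : ∀ (t : ℝ), 0 ≤ t → ∀ (l : Site D n) (k : Fin n),
      |x (Function.update l k (l k - 1)) t - x l t| ≤ Q := by
    intro t ht l k
    rw [hQdef, ← Real.sqrt_sq_eq_abs]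
    apply Real.sqrt_le_sqrt
    nlinarith [hterm t ht l k, sq_nonneg (x (Function.update l k (l k + 1)) t - x l t)]
  -- bound on Laplacians
  have habs2 : ∀ (g : Site D n → ℝ) (l : Site D n) (b : ℝ),
      (∀ k : Fin n, |g (Function.update l k (l k + 1)) - g l| ≤ b
        ∧ |g (Function.update l k (l k - 1)) - g l| ≤ b) →
      |lap g l| ≤ (n:ℝ)*(2*b/Ksq) := by
    intro g l b hg
    rw [hLap]
    simp only [nbrSum]
    calc |∑ k : Fin n, ((g (Function.update l k (l k + 1)) - g l)/Ksq
            + (g (Function.update l k (l k - 1)) - g l)/Ksq)|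
        ≤ ∑ k : Fin n, |(g (Function.update l k (l k + 1)) - g l)/Ksq
            + (g (Function.update l k (l k - 1)) - g l)/Ksq| :=
          Finset.abs_sum_le_sum_abs _ _
      _ ≤ ∑ _k : Fin n, (2*b/Ksq) := by
          apply Finset.sum_le_sum
          intro k _
          have h1 := (hg k).1
          have h2 := (hg k).2
          calc |(g (Function.update l k (l k + 1)) - g l)/Ksq
              + (g (Function.update l k (l k - 1)) - g l)/Ksq|
              ≤ |(g (Function.update l k (l k + 1)) - g l)/Ksq|
                + |(g (Function.update l k (l k - 1)) - g l)/Ksq| := abs_add_le _ _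
            _ = |g (Function.update l k (l k + 1)) - g l|/Ksq
                + |g (Function.update l k (l k - 1)) - g l|/Ksq := by
                rw [abs_div, abs_div, abs_of_pos hKsq]
            _ ≤ b/Ksq + b/Ksq :=
                add_le_add ((div_le_div_iff_of_pos_right hKsq).2 h1) ((div_le_div_iff_of_pos_right hKsq).2 h2)
            _ = 2*b/Ksq := by ring
      _ = (n:ℝ)*(2*b/Ksq) := by
          rw [Finset.sum_const, Finset.card_univ, Fintype.card_fin, nsmul_eq_mul]
  have hlapxb : ∀ (t : ℝ), 0 ≤ t → ∀ l : Site D n,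
      |lap (fun l' => x l' t) l| ≤ (n:ℝ)*(2*Q/Ksq) := by
    intro t ht l
    exact habs2 _ l Q (fun k => ⟨hQp t ht l k, hQm t ht l k⟩)
  have hlapvb : ∀ (t : ℝ), 0 ≤ t → ∀ l : Site D n,
      |lap (fun l' => v l' t) l| ≤ (n:ℝ)*(2*(2*Bv)/Ksq) := by
    intro t ht l
    apply habs2 _ l (2*Bv)
    intro k
    constructor
    · calc |v (Function.update l k (l k + 1)) t - v l t|
          ≤ |v (Function.update l k (l k + 1)) t| + |v l t| := abs_sub _ _
        _ ≤ Bv + Bv := add_le_add (hvb _ t ht) (hvb _ t ht)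
        _ = 2*Bv := by ring
    · calc |v (Function.update l k (l k - 1)) t - v l t|
          ≤ |v (Function.update l k (l k - 1)) t| + |v l t| := abs_sub _ _
        _ ≤ Bv + Bv := add_le_add (hvb _ t ht) (hvb _ t ht)
        _ = 2*Bv := by ring
  -- bound on the right-hand side
  have hQ0 : 0 ≤ Q := by rw [hQdef]; exact Real.sqrt_nonneg _
  have hBv0 : 0 ≤ Bv := by rw [hBvdef]; exact Real.sqrt_nonneg _
  set Bw := (n:ℝ)*(2*Q/Ksq) + (α + β*(2*EE 0))*Bv + M with hBwdef
  clear_value Bw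
  have hwb : ∀ t : ℝ, 0 ≤ t → |w l₀ t| ≤ Bw := by
    intro t ht
    have h1 : |lap (fun l' => x l' t) l₀| ≤ (n:ℝ)*(2*Q/Ksq) := hlapxb t ht l₀
    have h2 : |(α - β * (v l₀ t) ^ 2) * v l₀ t| ≤ (α + β*(2*EE 0))*Bv := by
      rw [abs_mul]
      apply mul_le_mul ?_ (hvb l₀ t ht) (abs_nonneg _) (by nlinarith [hEnn 0])
      calc |α - β * (v l₀ t)^2| ≤ |α| + |β * (v l₀ t)^2| := abs_sub _ _
        _ = α + β*(v l₀ t)^2 := by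
            rw [abs_of_pos hα, abs_of_nonneg (by positivity)]
        _ ≤ α + β*(2*EE 0) := by nlinarith [hv2 l₀ t ht]
    have h3 : |fb M a₁ a₂ (v l₀ t)| ≤ M := fb_abs_le M a₁ a₂ hM0 ha₁0 ha₁₂ _
    rw [hwdef]
    simp only
    calc |lap (fun l' => x l' t) l₀ + (α - β * (v l₀ t) ^ 2) * v l₀ t + fb M a₁ a₂ (v l₀ t)|
        ≤ |lap (fun l' => x l' t) l₀ + (α - β * (v l₀ t) ^ 2) * v l₀ t|
          + |fb M a₁ a₂ (v l₀ t)| := abs_add_le _ _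
      _ ≤ (|lap (fun l' => x l' t) l₀| + |(α - β * (v l₀ t) ^ 2) * v l₀ t|)
          + |fb M a₁ a₂ (v l₀ t)| := by
          have := abs_add_le (lap (fun l' => x l' t) l₀) ((α - β * (v l₀ t) ^ 2) * v l₀ t)
          linarith
      _ ≤ Bw := by rw [hBwdef]; linarith
  have hBw0 : 0 < Bw := by
    have q1 : 0 ≤ (n:ℝ)*(2*Q/Ksq) :=
      mul_nonneg (Nat.cast_nonneg n) (div_nonneg (by linarith) hKsq.le)
    have q2 : 0 ≤ (α + β*(2*EE 0))*Bv := mul_nonneg (by nlinarith [hEnn 0]) hBv0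
    rw [hBwdef]
    linarith
  -- velocity is Lipschitz
  have hvLip : ∀ s t : ℝ, 0 ≤ s → 0 ≤ t → |v l₀ s - v l₀ t| ≤ Bw*|s-t| := by
    intro s t hs ht
    have h := Convex.norm_image_sub_le_of_norm_hasDerivWithin_le
      (f := v l₀) (f' := w l₀) (C := Bw) (s := Set.Ici (0:ℝ))
      (fun u hu => (hv' l₀ u hu).hasDerivWithinAt)
      (fun u hu => by rw [Real.norm_eq_abs]; exact hwb u hu)
      (convex_Ici 0) ht hs
    simpa [Real.norm_eq_abs] using h
  -- velocity tends to zero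
  have hv0 : Tendsto (fun t => v l₀ t) atTop (nhds 0) := by
    rw [Metric.tendsto_atTop]
    intro ε hε
    have hδ0 : 0 < ε/(2*Bw) := by positivity
    set δ := ε/(2*Bw) with hδdef
    have hdiff : Tendsto (fun t => EE t - EE (t+δ)) atTop (nhds 0) := by
      have h1 : Tendsto (fun t : ℝ => t + δ) atTop atTop :=
        tendsto_atTop_add_const_right atTop δ tendsto_id
      have h2 : Tendsto (fun t => EE (t+δ)) atTop (nhds L) := hElim.comp h1
      have h3 := hElim.sub h2
      simpa using h3
    obtain ⟨N1, hN1⟩ := Metric.tendsto_atTop.1 hdiff (c*(ε/2)^2*δ)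
      (mul_pos (mul_pos hc0 (by positivity)) hδ0)
    refine ⟨max N1 0, fun t ht => ?_⟩
    have ht0 : (0:ℝ) ≤ t := le_trans (le_max_right _ _) ht
    have htN : N1 ≤ t := le_trans (le_max_left _ _) ht
    rw [Real.dist_eq, sub_zero]
    by_contra hcon
    push_neg at hcon
    have hBδ : Bw*δ = ε/2 := by rw [hδdef]; field_simp
    have hsl : ∀ s ∈ Set.Icc t (t+δ), (ε/2)^2 ≤ (v l₀ s)^2 := by
      intro s hs
      have h1 := hvLip s t (le_trans ht0 hs.1) ht0
      have h2 : |s - t| ≤ δ := by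
        rw [abs_of_nonneg (by linarith [hs.1])]
        linarith [hs.2]
      have h3 : |v l₀ s - v l₀ t| ≤ ε/2 := by
        calc |v l₀ s - v l₀ t| ≤ Bw*|s-t| := h1
          _ ≤ Bw*δ := by nlinarith [hBw0, abs_nonneg (s-t)]
          _ = ε/2 := hBδ
      have h4 : ε/2 ≤ |v l₀ s| := by
        have h5 : |v l₀ t| - |v l₀ s| ≤ |v l₀ t - v l₀ s| := abs_sub_abs_le_abs_sub _ _
        rw [abs_sub_comm] at h5
        linarith
      calc (ε/2)^2 ≤ |v l₀ s|^2 := by nlinarith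
        _ = (v l₀ s)^2 := sq_abs _
    have hEd : ∀ s ∈ Set.Icc t (t+δ),
        (∑ l : Site D n, v l s * ((α - β * (v l s) ^ 2) * v l s + fb M a₁ a₂ (v l s)))
          ≤ -(c*(ε/2)^2) := by
      intro s hs
      rw [← Finset.add_sum_erase _ _ (Finset.mem_univ l₀)]
      have h2 : ∑ l ∈ Finset.univ.erase l₀,
          v l s * ((α - β * (v l s) ^ 2) * v l s + fb M a₁ a₂ (v l s)) ≤ 0 :=
        Finset.sum_nonpos (fun l _ => hgf0 (v l s))
      have h3 := hgf (v l₀ s)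
      have h4 := hsl s hs
      nlinarith [hc0]
    have hdec := decay_le EE
      (fun s => ∑ l : Site D n, v l s * ((α - β * (v l s) ^ 2) * v l s + fb M a₁ a₂ (v l s)))
      t δ (c*(ε/2)^2) hδ0.le (fun s hs => hE' s (le_trans ht0 hs.1)) hEd
    have h5 := hN1 t htN
    rw [Real.dist_eq, abs_lt] at h5
    linarith [h5.2, hdec]
  -- tail: the control is linear
  obtain ⟨T₀, hT₀⟩ := Metric.tendsto_atTop.1 hv0 a₁ ha₁0
  set T := max T₀ 0 with hTdef
  have hT0 : (0:ℝ) ≤ T := le_max_right _ _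
  have hvsmall : ∀ t, T ≤ t → |v l₀ t| < a₁ := by
    intro t ht
    have := hT₀ t (le_trans (le_max_left _ _) ht)
    rwa [Real.dist_eq, sub_zero] at this
  set φ : ℝ → ℝ := fun s =>
    lap (fun l' => x l' s) l₀ + (α - β*(v l₀ s)^2)*(v l₀ s) - (M/a₁)*(v l₀ s) with hφdef
  clear_value φ
  have hφeq : ∀ t, T ≤ t → w l₀ t = φ t := by
    intro t ht
    rw [hwdef, hφdef]
    simp only
    rw [fb_small M a₁ a₂ ha₁0 ha₁₂ _ (hvsmall t ht)]
    ring
  have hφd : ∀ t : ℝ, 0 ≤ t → HasDerivAt φ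
      (lap (fun l' => v l' t) l₀ + (α - 3*β*(v l₀ t)^2)*(w l₀ t) - (M/a₁)*(w l₀ t)) t := by
    intro t ht
    rw [hφdef]
    have hlapd : HasDerivAt (fun s => lap (fun l' => x l' s) l₀) (lap (fun l' => v l' t) l₀) t := by
      simp only [lap, nbrSum]
      apply HasDerivAt.fun_sum
      intro k _
      exact (((hx _ t ht).fun_sub (hx l₀ t ht)).div_const _).fun_add
        (((hx _ t ht).fun_sub (hx l₀ t ht)).div_const _)
    have h2 := ((hasDerivAt_const t α).fun_sub (((hv' l₀ t ht).fun_pow 2).const_mul β)).fun_mul (hv' l₀ t ht)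
    have h3 : HasDerivAt (fun s => (M/a₁)*(v l₀ s)) ((M/a₁)*(w l₀ t)) t :=
      (hv' l₀ t ht).const_mul _
    have h4 := (hlapd.fun_add h2).fun_sub h3
    refine h4.congr_deriv ?_
    push_cast
    ring
  set B₂ := (n:ℝ)*(2*(2*Bv)/Ksq) + (α + 3*β*(2*EE 0))*Bw + (M/a₁)*Bw with hB₂def
  clear_value B₂
  have hφdb : ∀ t : ℝ, 0 ≤ t →
      |lap (fun l' => v l' t) l₀ + (α - 3*β*(v l₀ t)^2)*(w l₀ t) - (M/a₁)*(w l₀ t)| ≤ B₂ := by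
    intro t ht
    have h1 := hlapvb t ht l₀
    have h2 : |(α - 3*β*(v l₀ t)^2)*(w l₀ t)| ≤ (α + 3*β*(2*EE 0))*Bw := by
      rw [abs_mul]
      apply mul_le_mul ?_ (hwb t ht) (abs_nonneg _) (by nlinarith [hEnn 0])
      calc |α - 3*β*(v l₀ t)^2| ≤ |α| + |3*β*(v l₀ t)^2| := abs_sub _ _
        _ = α + 3*β*(v l₀ t)^2 := by
            rw [abs_of_pos hα, abs_of_nonneg (by positivity)]
        _ ≤ α + 3*β*(2*EE 0) := by nlinarith [hv2 l₀ t ht]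
    have h3 : |(M/a₁)*(w l₀ t)| ≤ (M/a₁)*Bw := by
      rw [abs_mul, abs_of_pos (div_pos hM0 ha₁0)]
      exact mul_le_mul_of_nonneg_left (hwb t ht) (div_pos hM0 ha₁0).le
    calc |lap (fun l' => v l' t) l₀ + (α - 3*β*(v l₀ t)^2)*(w l₀ t) - (M/a₁)*(w l₀ t)|
        ≤ |lap (fun l' => v l' t) l₀ + (α - 3*β*(v l₀ t)^2)*(w l₀ t)| + |(M/a₁)*(w l₀ t)| :=
          abs_sub _ _
      _ ≤ (|lap (fun l' => v l' t) l₀| + |(α - 3*β*(v l₀ t)^2)*(w l₀ t)|) + |(M/a₁)*(w l₀ t)| := by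
          have := abs_add_le (lap (fun l' => v l' t) l₀) ((α - 3*β*(v l₀ t)^2)*(w l₀ t))
          linarith
      _ ≤ B₂ := by rw [hB₂def]; linarith
  have hB₂0 : 0 < B₂ := by
    have q1 : 0 ≤ (n:ℝ)*(2*(2*Bv)/Ksq) :=
      mul_nonneg (Nat.cast_nonneg n) (div_nonneg (by linarith) hKsq.le)
    have q2 : 0 ≤ (α + 3*β*(2*EE 0))*Bw := mul_nonneg (by nlinarith [hEnn 0]) hBw0.le
    have q3 : 0 < (M/a₁)*Bw := mul_pos (div_pos hM0 ha₁0) hBw0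
    rw [hB₂def]
    linarith
  have hφLip : ∀ s t : ℝ, T ≤ s → T ≤ t → |φ s - φ t| ≤ B₂*|s-t| := by
    intro s t hs ht
    have h := Convex.norm_image_sub_le_of_norm_hasDerivWithin_le
      (f := φ)
      (f' := fun u => lap (fun l' => v l' u) l₀ + (α - 3*β*(v l₀ u)^2)*(w l₀ u) - (M/a₁)*(w l₀ u))
      (C := B₂) (s := Set.Ici T)
      (fun u hu => (hφd u (le_trans hT0 hu)).hasDerivWithinAt)
      (fun u hu => by rw [Real.norm_eq_abs]; exact hφdb u (le_trans hT0 hu))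
      (convex_Ici T) ht hs
    simpa [Real.norm_eq_abs] using h
  have hvd : ∀ t, T ≤ t → HasDerivAt (v l₀) (φ t) t :=
    fun t ht => (hφeq t ht) ▸ hv' l₀ t (le_trans hT0 ht)
  have hφ0 : Tendsto φ atTop (nhds 0) :=
    tendsto_deriv_zero (v l₀) φ T B₂ hB₂0 hvd hφLip hv0
  -- conclusion
  have hrest : Tendsto (fun t => (α - β*(v l₀ t)^2)*(v l₀ t) - (M/a₁)*(v l₀ t)) atTop
      (nhds 0) := by
    have h2 := ((tendsto_const_nhds (x := α)).sub ((hv0.pow 2).const_mul β)).mul hv0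
    have h3 := h2.sub (hv0.const_mul (M/a₁))
    simpa using h3
  have hfin := hφ0.sub hrest
  rw [sub_zero] at hfin
  apply hfin.congr
  intro t
  simp only [hφdef]
  ring
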